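/- arXiv:1905.06571 — 3 statements merged into one kernel-verified Lean document; each statement's English description precedes it below -/
import Mathlib

section
/- Fix integers m ≥ 2, N ≥ 1, points x₁, …, x_{2^m} ∈ ℝ^N and y₁, …, y_{2^m} ∈ ℝ^N, a finite Borel measure μ on ℝ^N, and let Θ = { t ∈ ℝ^{2^m} : t_j ≥ 0, t_{2i−1} + t_{2i} = 2^{1−m} for all 1 ≤ i ≤ 2^{m−1}, Σ_j t_j·δ_{x_j} = μ }. For t ∈ Θ define T(t) = { s ∈ Θ : for all 0 ≤ k ≤ m−2 and 1 ≤ i ≤ 2^k, Y_i^{(k)}(s) is parallel to X_i^{(k)}(t) }. Then for every t ∈ Θ, the set T(t) is convex. -/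
open MeasureTheory

/- Throughout, `m = p + 1` (so `m ≥ 2` corresponds to `1 ≤ p`); vectors of
`ℝ^{2^m}` are indexed by `Fin (2^(p+1))`, and the pair `(t_{2i−1}, t_{2i})`
(1-based) corresponds to the 0-based indices `(lo i, hi i)`. -/

/-- 0-based index `2i` of the 1-based odd index `2i−1`. -/
def lo {n : ℕ} (i : Fin n) : Fin (n * 2) := ⟨2 * i.1, by have := i.2; omega⟩

/-- 0-based index `2i+1` of the 1-based even index `2i`. -/
def hi {n : ℕ} (i : Fin n) : Fin (n * 2) := ⟨2 * i.1 + 1, by have := i.2; omega⟩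

/-- The level `m−1 = p` vectors: `x_i^{(m−1)}(t) = (1−λ_i)·x_{2i−1} + λ_i·x_{2i}`
with `λ_i = λ_i^{(m−1)}(t) = 2^{m−1}·t_{2i}`. -/
noncomputable def leaf {N p : ℕ} (x : Fin (2 ^ (p + 1)) → Fin N → ℝ)
    (t : Fin (2 ^ (p + 1)) → ℝ) (r : Fin (2 ^ p)) : Fin N → ℝ :=
  (1 - 2 ^ p * t (hi r)) • x (lo r) + (2 ^ p * t (hi r)) • x (hi r)

/-- The recursively defined vectors `x_i^{(k)}(t)`: for `k ≤ p = m−1` they are the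
(dyadic) averages of the level `m−1` vectors below node `i` of level `k`
(this closed form is exactly the recursion
`x_i^{(k)} = (x_{2i−1}^{(k+1)} + x_{2i}^{(k+1)})/2` for `0 ≤ k ≤ m−2` started at
level `m−1` from `leaf`); for `k = m = p+1` they are the given points `x_j`. -/
noncomputable def lev {N p : ℕ} (x : Fin (2 ^ (p + 1)) → Fin N → ℝ)
    (t : Fin (2 ^ (p + 1)) → ℝ) (k : ℕ) (i : Fin (2 ^ k)) : Fin N → ℝ :=
  if h : k ≤ p then
    ((2 : ℝ) ^ (p - k))⁻¹ • ∑ j : Fin (2 ^ (p - k)),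
      leaf x t ⟨i.1 * 2 ^ (p - k) + j.1, by
        have h1 : i.1 + 1 ≤ 2 ^ k := i.2
        have h2 := j.2
        calc i.1 * 2 ^ (p - k) + j.1 < (i.1 + 1) * 2 ^ (p - k) := by nlinarith
          _ ≤ 2 ^ k * 2 ^ (p - k) := Nat.mul_le_mul_right _ h1
          _ = 2 ^ p := by rw [← pow_add]; congr 1; omega⟩
  else x ⟨i.1 % 2 ^ (p + 1), Nat.mod_lt _ (Nat.pow_pos (by omega))⟩

/-- The decomposition directions `X_i^{(k)}(t) = x_{2i−1}^{(k+1)}(t) − x_{2i}^{(k+1)}(t)`. -/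
noncomputable def dir {N p : ℕ} (x : Fin (2 ^ (p + 1)) → Fin N → ℝ)
    (t : Fin (2 ^ (p + 1)) → ℝ) (k : ℕ) (i : Fin (2 ^ k)) : Fin N → ℝ :=
  lev x t (k + 1) (lo i) - lev x t (k + 1) (hi i)

/-- Two vectors of `ℝ^N` are parallel: `X_a·Y_b = X_b·Y_a` for all components. -/
def IsParallel {N : ℕ} (X Y : Fin N → ℝ) : Prop :=
  ∀ a b : Fin N, X a * Y b = X b * Y a

/-- The set `Θ`: nonnegative weights with dyadic pair sums `2^{1−m} = (2^p)⁻¹`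
representing the measure `μ` as `Σ_j t_j·δ_{x_j}`. -/
def Theta {N p : ℕ} (x : Fin (2 ^ (p + 1)) → Fin N → ℝ) (μ : Measure (Fin N → ℝ)) :
    Set (Fin (2 ^ (p + 1)) → ℝ) :=
  {t | (∀ j, 0 ≤ t j) ∧ (∀ i : Fin (2 ^ p), t (lo i) + t (hi i) = ((2 : ℝ) ^ p)⁻¹) ∧
    (∑ j, ENNReal.ofReal (t j) • Measure.dirac (x j)) = μ}

/-- The set-valued map `T`: those `s ∈ Θ` whose decomposition directions
`Y_i^{(k)}(s)` (built from the points `y`) are parallel to the decomposition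
directions `X_i^{(k)}(t)` (built from the points `x`), for all `0 ≤ k ≤ m−2`. -/
def Tmap {N p : ℕ} (x y : Fin (2 ^ (p + 1)) → Fin N → ℝ)
    (μ : Measure (Fin N → ℝ)) (t : Fin (2 ^ (p + 1)) → ℝ) :
    Set (Fin (2 ^ (p + 1)) → ℝ) :=
  {s | s ∈ Theta x μ ∧
    ∀ k < p, ∀ i : Fin (2 ^ k), IsParallel (dir y s k i) (dir x t k i)}


section Aux

variable {N p : ℕ}

lemma leaf_affine (y : Fin (2 ^ (p + 1)) → Fin N → ℝ)
    (s u : Fin (2 ^ (p + 1)) → ℝ) (a b : ℝ) (hab : a + b = 1) (r : Fin (2 ^ p)) :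
    leaf y (a • s + b • u) r = a • leaf y s r + b • leaf y u r := by
  funext c
  simp only [leaf, Pi.add_apply, Pi.smul_apply, smul_eq_mul]
  rw [show (a • s + b • u) (hi r) = a * s (hi r) + b * u (hi r) from rfl]
  linear_combination -(y (lo r) c) * hab

lemma lev_affine (y : Fin (2 ^ (p + 1)) → Fin N → ℝ)
    (s u : Fin (2 ^ (p + 1)) → ℝ) (a b : ℝ) (hab : a + b = 1)
    (k : ℕ) (hk : k ≤ p) (i : Fin (2 ^ k)) :
    lev y (a • s + b • u) k i = a • lev y s k i + b • lev y u k i := by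
  simp only [lev, dif_pos hk]
  rw [smul_comm a, smul_comm b, ← smul_add]
  congr 1
  rw [Finset.smul_sum, Finset.smul_sum, ← Finset.sum_add_distrib]
  refine Finset.sum_congr rfl fun j _ => ?_
  rw [leaf_affine y s u a b hab]

lemma dir_affine (y : Fin (2 ^ (p + 1)) → Fin N → ℝ)
    (s u : Fin (2 ^ (p + 1)) → ℝ) (a b : ℝ) (hab : a + b = 1)
    (k : ℕ) (hk : k < p) (i : Fin (2 ^ k)) :
    dir y (a • s + b • u) k i = a • dir y s k i + b • dir y u k i := by
  simp only [dir, lev_affine y s u a b hab (k + 1) (by omega)]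
  rw [lev_affine y s u a b hab (k + 1) (by omega) (lo i), lev_affine y s u a b hab (k + 1) (by omega) (hi i)]
  module

end Aux

/-- Convexity of the images of the map `T`. -/
theorem tmap_convex
    (p N : ℕ) (hp : 1 ≤ p) (hN : 1 ≤ N)
    (x y : Fin (2 ^ (p + 1)) → Fin N → ℝ)
    (μ : Measure (Fin N → ℝ)) [IsFiniteMeasure μ] :
    ∀ t ∈ Theta x μ, Convex ℝ (Tmap x y μ t) := by
  intro t ht
  intro s hs u hu a b ha hb hab
  obtain ⟨⟨hs0, hspair, hsmeas⟩, hspar⟩ := hs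
  obtain ⟨⟨hu0, hupair, humeas⟩, hupar⟩ := hu
  refine ⟨⟨?_, ?_, ?_⟩, ?_⟩
  · intro j
    have : 0 ≤ a * s j + b * u j :=
      add_nonneg (mul_nonneg ha (hs0 j)) (mul_nonneg hb (hu0 j))
    simpa using this
  · intro i
    have h1 := hspair i
    have h2 := hupair i
    rw [show (a • s + b • u) (lo i) = a * s (lo i) + b * u (lo i) from rfl,
      show (a • s + b • u) (hi i) = a * s (hi i) + b * u (hi i) from rfl]
    linear_combination a * h1 + b * h2 + ((2:ℝ)^p)⁻¹ * hab
  · have key : ∀ j : Fin (2 ^ (p + 1)),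
        ENNReal.ofReal ((a • s + b • u) j) • Measure.dirac (x j)
          = ENNReal.ofReal a • (ENNReal.ofReal (s j) • Measure.dirac (x j))
            + ENNReal.ofReal b • (ENNReal.ofReal (u j) • Measure.dirac (x j)) := by
      intro j
      have h1 : (a • s + b • u) j = a * s j + b * u j := by
        simp [Pi.add_apply, Pi.smul_apply, smul_eq_mul]
      rw [h1, ENNReal.ofReal_add (mul_nonneg ha (hs0 j)) (mul_nonneg hb (hu0 j)),
        ENNReal.ofReal_mul ha, ENNReal.ofReal_mul hb, add_smul, smul_smul, smul_smul]
    calc (∑ j, ENNReal.ofReal ((a • s + b • u) j) • Measure.dirac (x j))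
        = ∑ j, (ENNReal.ofReal a • (ENNReal.ofReal (s j) • Measure.dirac (x j))
            + ENNReal.ofReal b • (ENNReal.ofReal (u j) • Measure.dirac (x j))) := by
          exact Finset.sum_congr rfl fun j _ => key j
      _ = ENNReal.ofReal a • (∑ j, ENNReal.ofReal (s j) • Measure.dirac (x j))
            + ENNReal.ofReal b • (∑ j, ENNReal.ofReal (u j) • Measure.dirac (x j)) := by
          rw [Finset.sum_add_distrib, Finset.smul_sum, Finset.smul_sum]
      _ = (ENNReal.ofReal a + ENNReal.ofReal b) • μ := by
          rw [hsmeas, humeas, add_smul]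
      _ = μ := by
          rw [← ENNReal.ofReal_add ha hb, hab]
          simp
  · intro k hk i
    rw [dir_affine y s u a b hab k hk i]
    intro c d
    have h1 := hspar k hk i c d
    have h2 := hupar k hk i c d
    simp only [Pi.add_apply, Pi.smul_apply, smul_eq_mul]
    linear_combination a * h1 + b * h2
end

section
/- Fix integers m ≥ 2, N ≥ 1, points x₁, …, x_{2^m} ∈ ℝ^N and y₁, …, y_{2^m} ∈ ℝ^N, a finite Borel measure μ on ℝ^N, and let Θ = { t ∈ ℝ^{2^m} : t_j ≥ 0, t_{2i−1} + t_{2i} = 2^{1−m} for all 1 ≤ i ≤ 2^{m−1}, Σ_j t_j·δ_{x_j} = μ }. For t ∈ Θ define T(t) = { s ∈ Θ : for all 0 ≤ k ≤ m−2 and 1 ≤ i ≤ 2^k, Y_i^{(k)}(s) is parallel to X_i^{(k)}(t) }. Then the set-valued map T is upper semicontinuous in the closed-graph sense: if (t_n) and (s_n) are sequences in Θ with s_n ∈ T(t_n) for all n, t_n → t and s_n → s, then s ∈ T(t). -/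
open MeasureTheory

private lemma leaf_cont {N p : ℕ} (x : Fin (2 ^ (p + 1)) → Fin N → ℝ) (r : Fin (2 ^ p)) :
    Continuous fun t : Fin (2 ^ (p + 1)) → ℝ => leaf x t r := by
  unfold leaf; fun_prop

private lemma lev_cont {N p : ℕ} (x : Fin (2 ^ (p + 1)) → Fin N → ℝ) (k : ℕ) (i : Fin (2 ^ k)) :
    Continuous fun t : Fin (2 ^ (p + 1)) → ℝ => lev x t k i := by
  unfold lev
  by_cases h : k ≤ p
  · simp only [dif_pos h]
    exact (continuous_finset_sum _ fun j _ => leaf_cont x _).const_smul (((2 : ℝ) ^ (p - k))⁻¹)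
  · simp only [dif_neg h]; exact continuous_const

private lemma dir_cont {N p : ℕ} (x : Fin (2 ^ (p + 1)) → Fin N → ℝ) (k : ℕ) (i : Fin (2 ^ k)) :
    Continuous fun t : Fin (2 ^ (p + 1)) → ℝ => dir x t k i := by
  unfold dir
  exact (lev_cont x _ _).sub (lev_cont x _ _)

/-- Upper semicontinuity of the map `T` in the closed-graph sense. -/
theorem tmap_upper_semicontinuous
    (p N : ℕ) (hp : 1 ≤ p) (hN : 1 ≤ N)
    (x y : Fin (2 ^ (p + 1)) → Fin N → ℝ)
    (μ : Measure (Fin N → ℝ)) [IsFiniteMeasure μ]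
    (tSeq sSeq : ℕ → (Fin (2 ^ (p + 1)) → ℝ)) (t s : Fin (2 ^ (p + 1)) → ℝ)
    (htSeq : ∀ n, tSeq n ∈ Theta x μ)
    (hsSeq : ∀ n, sSeq n ∈ Tmap x y μ (tSeq n))
    (htlim : Filter.Tendsto tSeq Filter.atTop (nhds t))
    (hslim : Filter.Tendsto sSeq Filter.atTop (nhds s)) :
    s ∈ Tmap x y μ t := by
  constructor
  · refine ⟨?_, ?_, ?_⟩
    · intro j
      have hco : Filter.Tendsto (fun n => sSeq n j) Filter.atTop (nhds (s j)) :=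
        tendsto_pi_nhds.mp hslim j
      exact le_of_tendsto_of_tendsto' tendsto_const_nhds hco fun n => (hsSeq n).1.1 j
    · intro i
      have hco : Filter.Tendsto (fun n => sSeq n (lo i) + sSeq n (hi i)) Filter.atTop
          (nhds (s (lo i) + s (hi i))) :=
        (tendsto_pi_nhds.mp hslim (lo i)).add (tendsto_pi_nhds.mp hslim (hi i))
      have hc : Filter.Tendsto (fun n => sSeq n (lo i) + sSeq n (hi i)) Filter.atTop
          (nhds (((2 : ℝ) ^ p)⁻¹)) := by
        simp only [fun n => (hsSeq n).1.2.1 i]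
        exact tendsto_const_nhds
      exact tendsto_nhds_unique hco hc
    · ext A hA
      have hco : Filter.Tendsto
          (fun n => ∑ j, ENNReal.ofReal (sSeq n j) * Measure.dirac (x j) A) Filter.atTop
          (nhds (∑ j, ENNReal.ofReal (s j) * Measure.dirac (x j) A)) := by
        refine tendsto_finset_sum _ fun j _ => ?_
        refine ENNReal.Tendsto.mul_const ?_ (Or.inr (measure_ne_top _ _))
        exact (ENNReal.continuous_ofReal.tendsto _).comp (tendsto_pi_nhds.mp hslim j)
      have hc : ∀ n, (∑ j, ENNReal.ofReal (sSeq n j) * Measure.dirac (x j) A) = μ A := by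
        intro n
        have := (hsSeq n).1.2.2
        calc (∑ j, ENNReal.ofReal (sSeq n j) * Measure.dirac (x j) A)
            = (∑ j, ENNReal.ofReal (sSeq n j) • Measure.dirac (x j)) A := by
              rw [Measure.finset_sum_apply]
              simp [Measure.smul_apply]
          _ = μ A := by rw [this]
      have hco' : Filter.Tendsto
          (fun _ : ℕ => μ A) Filter.atTop
          (nhds (∑ j, ENNReal.ofReal (s j) * Measure.dirac (x j) A)) := by
        simpa only [hc] using hco
      have := tendsto_nhds_unique hco' tendsto_const_nhds
      rw [Measure.finset_sum_apply]
      simp only [Measure.smul_apply, smul_eq_mul]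
      exact this
  · intro k hk i a b
    have hy : ∀ c : Fin N, Filter.Tendsto (fun n => dir y (sSeq n) k i c) Filter.atTop
        (nhds (dir y s k i c)) := fun c =>
      tendsto_pi_nhds.mp (((dir_cont y k i).tendsto s).comp hslim) c
    have hx : ∀ c : Fin N, Filter.Tendsto (fun n => dir x (tSeq n) k i c) Filter.atTop
        (nhds (dir x t k i c)) := fun c =>
      tendsto_pi_nhds.mp (((dir_cont x k i).tendsto t).comp htlim) c
    have h1 : Filter.Tendsto (fun n => dir y (sSeq n) k i a * dir x (tSeq n) k i b)
        Filter.atTop (nhds (dir y s k i a * dir x t k i b)) := (hy a).mul (hx b)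
    have h2 : Filter.Tendsto (fun n => dir y (sSeq n) k i a * dir x (tSeq n) k i b)
        Filter.atTop (nhds (dir y s k i b * dir x t k i a)) := by
      have : (fun n => dir y (sSeq n) k i a * dir x (tSeq n) k i b)
          = fun n => dir y (sSeq n) k i b * dir x (tSeq n) k i a := by
        funext n; exact (hsSeq n).2 k hk i a b
      rw [this]; exact (hy b).mul (hx a)
    exact tendsto_nhds_unique h1 h2
end

section
/- Fix integers m ≥ 2, N ≥ 1, points x₁, …, x_{2^m} ∈ ℝ^N and y₁, …, y_{2^m} ∈ ℝ^N such that y_{2i−1} − y_{2i} is parallel to x_{2i−1} − x_{2i} for every 1 ≤ i ≤ 2^{m−1}. Let t ∈ ℝ^{2^m} satisfy t_j ≥ 0 and t_{2i−1} + t_{2i} = 2^{1−m} for all 1 ≤ i ≤ 2^{m−1}, and suppose t is a joint fixed point in the sense that Y_i^{(k)}(t) is parallel to X_i^{(k)}(t) for all 0 ≤ k ≤ m−2 and 1 ≤ i ≤ 2^k. For 1 ≤ j ≤ 2^m let F_j ∈ M^{2×N} be the matrix whose first row is x_j and whose second row is y_j, and set F̄ = Σ_j t_j·F_j. Then for every continuous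 rank-one convex function ψ : M^{2×N} → ℝ, ψ(F̄) ≤ Σ_j t_j·ψ(F_j); that is, the probability measure Σ_j t_j·δ_{F_j} is a laminate. -/
open MeasureTheory

/-- A function `ψ` on 2×N matrices is rank-one convex. -/
def RankOneConvex {N : ℕ} (ψ : Matrix (Fin 2) (Fin N) ℝ → ℝ) : Prop :=
  ∀ r ∈ Set.Icc (0 : ℝ) 1, ∀ F₁ F₂ : Matrix (Fin 2) (Fin N) ℝ,
    (F₁ - F₂).rank ≤ 1 → ψ (r • F₁ + (1 - r) • F₂) ≤ r * ψ F₁ + (1 - r) * ψ F₂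

-- ====== my auxiliary lemmas ======

lemma pow2_pos (k : ℕ) : 0 < 2 ^ k := Nat.pow_pos (by omega)

lemma pair_range {V : Type*} [AddCommMonoid V] (g : ℕ → V) :
    ∀ n, ∑ m ∈ Finset.range (2 * n), g m = ∑ i ∈ Finset.range n, (g (2 * i) + g (2 * i + 1))
  | 0 => by simp
  | (n + 1) => by
    rw [show 2 * (n + 1) = (2 * n) + 1 + 1 by ring, Finset.sum_range_succ, Finset.sum_range_succ,
      pair_range g n, Finset.sum_range_succ, add_assoc]

lemma sum_lo_hi {V : Type*} [AddCommMonoid V] {n : ℕ} (hn : 0 < n) (f : Fin (n * 2) → V) :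
    ∑ j, f j = ∑ i : Fin n, (f (lo i) + f (hi i)) := by
  have hn2 : 0 < n * 2 := by omega
  set g : ℕ → V := fun m => f ⟨m % (n * 2), Nat.mod_lt _ hn2⟩ with hg
  have e1 : ∑ j, f j = ∑ m ∈ Finset.range (n * 2), g m := by
    rw [← Fin.sum_univ_eq_sum_range g (n * 2)]
    exact Finset.sum_congr rfl fun j _ => by
      simp only [hg]; congr 1; exact Fin.ext (Nat.mod_eq_of_lt j.2).symm
  have e2 : ∑ m ∈ Finset.range (n * 2), g m
      = ∑ i ∈ Finset.range n, (g (2 * i) + g (2 * i + 1)) := by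
    rw [show n * 2 = 2 * n by ring]; exact pair_range g n
  have e3 : ∑ i ∈ Finset.range n, (g (2 * i) + g (2 * i + 1))
      = ∑ i : Fin n, (f (lo i) + f (hi i)) := by
    rw [← Fin.sum_univ_eq_sum_range (fun m => g (2 * m) + g (2 * m + 1)) n]
    refine Finset.sum_congr rfl fun i _ => ?_
    have h1 : 2 * i.1 < n * 2 := by have := i.2; omega
    have h2 : 2 * i.1 + 1 < n * 2 := by have := i.2; omega
    simp only [hg]
    congr 1
    · congr 1; exact Fin.ext (by simp [lo, Nat.mod_eq_of_lt h1])
    · congr 1; exact Fin.ext (by simp [hi, Nat.mod_eq_of_lt h2])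
  rw [e1, e2, e3]

lemma range_pow_split {V : Type*} [AddCommMonoid V] (g : ℕ → V) (d a : ℕ) :
    ∑ n ∈ Finset.range (2 ^ (d + 1)), g (a * 2 ^ (d + 1) + n)
      = ∑ n ∈ Finset.range (2 ^ d), g ((2 * a) * 2 ^ d + n)
        + ∑ n ∈ Finset.range (2 ^ d), g ((2 * a + 1) * 2 ^ d + n) := by
  rw [show (2 : ℕ) ^ (d + 1) = 2 ^ d + 2 ^ d by ring, Finset.sum_range_add]
  congr 1
  · exact Finset.sum_congr rfl fun n _ => by congr 1; ring
  · exact Finset.sum_congr rfl fun n _ => by congr 1; ring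

def mk2 {N : ℕ} (X Y : Fin N → ℝ) : Matrix (Fin 2) (Fin N) ℝ := Matrix.of ![X, Y]

lemma mk2_add {N : ℕ} (a b c d : Fin N → ℝ) : mk2 (a + b) (c + d) = mk2 a c + mk2 b d := by
  ext i j; fin_cases i <;> simp [mk2]

lemma mk2_smul {N : ℕ} (s : ℝ) (a b : Fin N → ℝ) : mk2 (s • a) (s • b) = s • mk2 a b := by
  ext i j; fin_cases i <;> simp [mk2]

lemma mk2_sub {N : ℕ} (a b c d : Fin N → ℝ) : mk2 a c - mk2 b d = mk2 (a - b) (c - d) := by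
  ext i j; fin_cases i <;> simp [mk2]

lemma rank_le_one_of_parallel {N : ℕ} {X Y : Fin N → ℝ} (h : IsParallel Y X) :
    (mk2 X Y).rank ≤ 1 := by
  by_cases hz : ∀ a, X a = 0 ∧ Y a = 0
  · have hA : mk2 X Y = 0 := by
      ext i a; fin_cases i <;> simp [mk2, (hz a).1, (hz a).2]
    rw [hA, Matrix.rank_zero]; omega
  push_neg at hz
  obtain ⟨a, ha⟩ := hz
  set v : Fin 2 → ℝ := ![X a, Y a] with hv
  have hcol : ∀ b : Fin N, ∃ c : ℝ, (fun i => mk2 X Y i b) = c • v := by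
    intro b
    by_cases hXa : X a = 0
    · have hYa : Y a ≠ 0 := ha hXa
      have hXb : X b = 0 := by
        have h1 := h b a
        rw [hXa, mul_zero] at h1
        rcases mul_eq_zero.mp h1.symm with h2 | h2
        · exact absurd h2 hYa
        · exact h2
      refine ⟨Y b / Y a, ?_⟩
      funext i; fin_cases i
      · simp [mk2, hv, hXa, hXb]
      · simp [mk2, hv]; field_simp
    · refine ⟨X b / X a, ?_⟩
      funext i; fin_cases i
      · simp [mk2, hv]; field_simp
      · simp [mk2, hv]
        have h1 := h a b
        field_simp
        linarith [h1]
  have hr : LinearMap.range (mk2 X Y).mulVecLin ≤ Submodule.span ℝ {v} := by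
    rintro w ⟨u, rfl⟩
    have hw : (mk2 X Y).mulVecLin u = ∑ b : Fin N, u b • (fun i => mk2 X Y i b) := by
      funext i
      simp [Matrix.mulVecLin_apply, Matrix.mulVec, dotProduct, Finset.sum_apply,
        mul_comm]
    rw [hw]
    refine Submodule.sum_mem _ fun b _ => Submodule.smul_mem _ _ ?_
    obtain ⟨c, hc⟩ := hcol b
    rw [hc]
    exact Submodule.smul_mem _ _ (Submodule.mem_span_singleton_self v)
  calc (mk2 X Y).rank
      = Module.finrank ℝ (LinearMap.range (mk2 X Y).mulVecLin) := rfl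
    _ ≤ Module.finrank ℝ (Submodule.span ℝ ({v} : Set (Fin 2 → ℝ))) :=
        Submodule.finrank_mono hr
    _ ≤ 1 := by simpa using finrank_span_le_card ({v} : Set (Fin 2 → ℝ))

section levlemmas
variable {N p : ℕ} (x : Fin (2 ^ (p + 1)) → Fin N → ℝ) (t : Fin (2 ^ (p + 1)) → ℝ)

lemma idx_lt {k : ℕ} (hk : k ≤ p) (i : Fin (2 ^ k)) {j : ℕ} (hj : j < 2 ^ (p - k)) :
    i.1 * 2 ^ (p - k) + j < 2 ^ p := by
  have h1 : i.1 + 1 ≤ 2 ^ k := i.2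
  have h3 : 2 ^ k * 2 ^ (p - k) = 2 ^ p := by rw [← pow_add]; congr 1; omega
  nlinarith

noncomputable def G (n : ℕ) : Fin N → ℝ := leaf x t ⟨n % 2 ^ p, Nat.mod_lt _ (pow2_pos p)⟩

lemma lev_eq_range {k : ℕ} (hk : k ≤ p) (i : Fin (2 ^ k)) :
    lev x t k i = ((2 : ℝ) ^ (p - k))⁻¹ •
      ∑ n ∈ Finset.range (2 ^ (p - k)), G x t (i.1 * 2 ^ (p - k) + n) := by
  unfold lev
  rw [dif_pos hk]
  congr 1
  rw [← Fin.sum_univ_eq_sum_range (fun n => G x t (i.1 * 2 ^ (p - k) + n)) (2 ^ (p - k))]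
  refine Finset.sum_congr rfl fun j _ => ?_
  unfold G
  simp [Nat.mod_eq_of_lt (idx_lt hk i j.2)]

lemma lev_top (i : Fin (2 ^ p)) : lev x t p i = leaf x t i := by
  rw [lev_eq_range x t le_rfl i]
  simp only [Nat.sub_self, pow_zero, inv_one, one_smul, mul_one, Finset.sum_range_one,
    Nat.add_zero]
  unfold G
  simp [Nat.mod_eq_of_lt i.2]

lemma lev_split {k : ℕ} (hk : k + 1 ≤ p) (i : Fin (2 ^ k)) :
    lev x t k i = (2 : ℝ)⁻¹ • (lev x t (k + 1) (lo i) + lev x t (k + 1) (hi i)) := by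
  have hk' : k ≤ p := by omega
  have hpk : p - k = (p - (k + 1)) + 1 := by omega
  set d := p - (k + 1) with hd
  rw [lev_eq_range x t hk' i, lev_eq_range x t hk (lo i), lev_eq_range x t hk (hi i), hpk]
  rw [show (lo i).1 = 2 * i.1 from rfl, show (hi i).1 = 2 * i.1 + 1 from rfl]
  rw [range_pow_split (G x t) d i.1]
  rw [show ((2:ℝ) ^ (d+1))⁻¹ = 2⁻¹ * ((2:ℝ)^d)⁻¹ by rw [pow_succ]; ring]
  rw [mul_smul, smul_add]

end levlemmas

/-- A joint fixed point (decomposition directions of both components parallel at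
every level) produces a laminate: Jensen's inequality holds for every continuous
rank-one convex function. -/
theorem fixed_point_gives_laminate
    (p N : ℕ) (hp : 1 ≤ p) (hN : 1 ≤ N)
    (x y : Fin (2 ^ (p + 1)) → Fin N → ℝ)
    (hleaf : ∀ i : Fin (2 ^ p), IsParallel (y (lo i) - y (hi i)) (x (lo i) - x (hi i)))
    (t : Fin (2 ^ (p + 1)) → ℝ)
    (ht0 : ∀ j, 0 ≤ t j)
    (hts : ∀ i : Fin (2 ^ p), t (lo i) + t (hi i) = ((2 : ℝ) ^ p)⁻¹)
    (hfix : ∀ k < p, ∀ i : Fin (2 ^ k), IsParallel (dir y t k i) (dir x t k i))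
    (F : Fin (2 ^ (p + 1)) → Matrix (Fin 2) (Fin N) ℝ)
    (hF : ∀ j, F j = Matrix.of ![x j, y j])
    (Fbar : Matrix (Fin 2) (Fin N) ℝ) (hFbar : Fbar = ∑ j, t j • F j) :
    ∀ ψ : Matrix (Fin 2) (Fin N) ℝ → ℝ, Continuous ψ → RankOneConvex ψ →
      ψ Fbar ≤ ∑ j, t j * ψ (F j) := by
  intro ψ _ hRC
  have h2p : (0:ℝ) < 2 ^ p := by positivity
  have h2pn : ((2:ℝ) ^ p) ≠ 0 := ne_of_gt h2p
  -- basic weight identities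
  have hprod : ∀ r : Fin (2 ^ p), (2:ℝ) ^ p * (t (lo r) + t (hi r)) = 1 := by
    intro r; rw [hts r, mul_inv_cancel₀ h2pn]
  have hlam : ∀ r : Fin (2 ^ p), 1 - 2 ^ p * t (hi r) = 2 ^ p * t (lo r) := by
    intro r; have := hprod r; ring_nf at this ⊢; linarith
  -- matrices
  set LM : Fin (2 ^ p) → Matrix (Fin 2) (Fin N) ℝ :=
    fun r => mk2 (leaf x t r) (leaf y t r) with hLM
  set Mk : (k : ℕ) → Fin (2 ^ k) → Matrix (Fin 2) (Fin N) ℝ :=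
    fun k i => mk2 (lev x t k i) (lev y t k i) with hMk
  -- Claim B : leaf-level splitting
  have claimB : ∀ r : Fin (2 ^ p),
      ψ (LM r) ≤ 2 ^ p * t (lo r) * ψ (F (lo r)) + 2 ^ p * t (hi r) * ψ (F (hi r)) := by
    intro r
    set lam : ℝ := 2 ^ p * t (hi r) with hlamdef
    have hdecomp : LM r = (1 - lam) • F (lo r) + lam • F (hi r) := by
      rw [hF (lo r), hF (hi r), hLM]
      show mk2 (leaf x t r) (leaf y t r)
          = (1 - lam) • mk2 (x (lo r)) (y (lo r)) + lam • mk2 (x (hi r)) (y (hi r))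
      rw [← mk2_smul, ← mk2_smul, ← mk2_add]
      rfl
    have hrank : (F (lo r) - F (hi r)).rank ≤ 1 := by
      rw [hF (lo r), hF (hi r)]
      show (mk2 (x (lo r)) (y (lo r)) - mk2 (x (hi r)) (y (hi r))).rank ≤ 1
      rw [mk2_sub]
      exact rank_le_one_of_parallel (hleaf r)
    have hhi0 : 0 ≤ lam := mul_nonneg (le_of_lt h2p) (ht0 (hi r))
    have hlo0 : 0 ≤ 1 - lam := by
      have := mul_nonneg (le_of_lt h2p) (ht0 (lo r))
      rw [hlam r]; exact this
    have h01 : 1 - lam ∈ Set.Icc (0:ℝ) 1 := ⟨hlo0, by linarith⟩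
    have step := hRC (1 - lam) h01 (F (lo r)) (F (hi r)) hrank
    rw [show (1:ℝ) - (1 - lam) = lam by ring] at step
    rw [hdecomp]
    calc ψ ((1 - lam) • F (lo r) + lam • F (hi r))
        ≤ (1 - lam) * ψ (F (lo r)) + lam * ψ (F (hi r)) := step
      _ = 2 ^ p * t (lo r) * ψ (F (lo r)) + 2 ^ p * t (hi r) * ψ (F (hi r)) := by
          rw [hlam r]
  -- real-valued leaf function on ℕ
  set H : ℕ → ℝ := fun n => ψ (LM ⟨n % 2 ^ p, Nat.mod_lt _ (pow2_pos p)⟩) with hH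
  have hHval : ∀ r : Fin (2 ^ p), H r.1 = ψ (LM r) := by
    intro r
    exact congrArg (fun z => ψ (LM z)) (Fin.ext (Nat.mod_eq_of_lt r.2))
  -- Claim A : tree induction
  have claimA : ∀ d k, k + d = p → ∀ i : Fin (2 ^ k),
      ψ (Mk k i) ≤ ((2:ℝ) ^ d)⁻¹ * ∑ n ∈ Finset.range (2 ^ d), H (i.1 * 2 ^ d + n) := by
    intro d
    induction d with
    | zero =>
      intro k hk i
      have hkp : k = p := by omega
      subst hkp
      have hMeq : Mk k i = LM i := by
        rw [hMk, hLM]; show mk2 _ _ = mk2 _ _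
        rw [lev_top x t i, lev_top y t i]
      simp only [pow_zero, inv_one, one_mul, Finset.sum_range_one, mul_one, Nat.mul_one,
        Nat.add_zero, add_zero]
      rw [hMeq, hHval i]
    | succ d IH =>
      intro k hk i
      have hk1 : k + 1 ≤ p := by omega
      have hMsplit : Mk k i = (2:ℝ)⁻¹ • Mk (k + 1) (lo i) + (2:ℝ)⁻¹ • Mk (k + 1) (hi i) := by
        show mk2 (lev x t k i) (lev y t k i)
            = (2:ℝ)⁻¹ • mk2 (lev x t (k + 1) (lo i)) (lev y t (k + 1) (lo i))
              + (2:ℝ)⁻¹ • mk2 (lev x t (k + 1) (hi i)) (lev y t (k + 1) (hi i))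
        rw [lev_split x t hk1 i, lev_split y t hk1 i, smul_add, smul_add,
          mk2_add, mk2_smul, mk2_smul]
      have hrank : (Mk (k + 1) (lo i) - Mk (k + 1) (hi i)).rank ≤ 1 := by
        have heq : Mk (k + 1) (lo i) - Mk (k + 1) (hi i)
            = mk2 (dir x t k i) (dir y t k i) := by
          rw [hMk]
          show mk2 _ _ - mk2 _ _ = _
          rw [mk2_sub]
          rfl
        rw [heq]
        exact rank_le_one_of_parallel (hfix k (by omega) i)
      have step := hRC (2:ℝ)⁻¹ ⟨by norm_num, by norm_num⟩
        (Mk (k + 1) (lo i)) (Mk (k + 1) (hi i)) hrank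
      rw [show (1:ℝ) - 2⁻¹ = 2⁻¹ by norm_num] at step
      have IHlo := IH (k + 1) (by omega) (lo i)
      have IHhi := IH (k + 1) (by omega) (hi i)
      rw [show (lo i).1 = 2 * i.1 from rfl] at IHlo
      rw [show (hi i).1 = 2 * i.1 + 1 from rfl] at IHhi
      have hsplit : ((2:ℝ) ^ (d + 1))⁻¹ * ∑ n ∈ Finset.range (2 ^ (d + 1)), H (i.1 * 2 ^ (d + 1) + n)
          = 2⁻¹ * (((2:ℝ) ^ d)⁻¹ * ∑ n ∈ Finset.range (2 ^ d), H ((2 * i.1) * 2 ^ d + n))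
            + 2⁻¹ * (((2:ℝ) ^ d)⁻¹ * ∑ n ∈ Finset.range (2 ^ d), H ((2 * i.1 + 1) * 2 ^ d + n)) := by
        rw [range_pow_split H d i.1, pow_succ]
        ring
      rw [hsplit, hMsplit]
      calc ψ ((2:ℝ)⁻¹ • Mk (k + 1) (lo i) + (2:ℝ)⁻¹ • Mk (k + 1) (hi i))
          ≤ 2⁻¹ * ψ (Mk (k + 1) (lo i)) + 2⁻¹ * ψ (Mk (k + 1) (hi i)) := step
        _ ≤ _ := by
            have half : (0:ℝ) ≤ 2⁻¹ := by norm_num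
            exact add_le_add (mul_le_mul_of_nonneg_left IHlo half)
              (mul_le_mul_of_nonneg_left IHhi half)
  -- identify Fbar with the root of the tree
  set i0 : Fin (2 ^ 0) := ⟨0, pow2_pos 0⟩ with hi0
  have hrow : ∀ z : Fin (2 ^ (p + 1)) → Fin N → ℝ,
      lev z t 0 i0 = ∑ j, t j • z j := by
    intro z
    have A1 : lev z t 0 i0 = ((2:ℝ) ^ p)⁻¹ • ∑ n ∈ Finset.range (2 ^ p), G z t n := by
      rw [lev_eq_range z t (Nat.zero_le p) i0]
      simp only [Nat.sub_zero]
      congr 1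
      refine Finset.sum_congr rfl fun n _ => ?_
      exact congrArg (G z t) (by show 0 * 2 ^ p + n = n; simp)
    have A2 : ((2:ℝ) ^ p)⁻¹ • ∑ n ∈ Finset.range (2 ^ p), G z t n
        = ∑ r : Fin (2 ^ p), ((2:ℝ) ^ p)⁻¹ • leaf z t r := by
      rw [← Fin.sum_univ_eq_sum_range (G z t) (2 ^ p), Finset.smul_sum]
      refine Finset.sum_congr rfl fun r _ => ?_
      congr 1
      unfold G
      simp [Nat.mod_eq_of_lt r.2]
    have A3 : ∀ r : Fin (2 ^ p),
        ((2:ℝ) ^ p)⁻¹ • leaf z t r = t (lo r) • z (lo r) + t (hi r) • z (hi r) := by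
      intro r
      unfold leaf
      have e1 : ((2:ℝ) ^ p)⁻¹ * (1 - 2 ^ p * t (hi r)) = t (lo r) := by
        rw [hlam r, ← mul_assoc, inv_mul_cancel₀ h2pn, one_mul]
      have e2 : ((2:ℝ) ^ p)⁻¹ * (2 ^ p * t (hi r)) = t (hi r) := by
        rw [← mul_assoc, inv_mul_cancel₀ h2pn, one_mul]
      rw [smul_add, smul_smul, smul_smul, e1, e2]
    calc lev z t 0 i0 = ∑ r : Fin (2 ^ p), ((2:ℝ) ^ p)⁻¹ • leaf z t r := by rw [A1, A2]
      _ = ∑ r : Fin (2 ^ p), (t (lo r) • z (lo r) + t (hi r) • z (hi r)) :=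
          Finset.sum_congr rfl fun r _ => A3 r
      _ = ∑ j : Fin (2 ^ p * 2), t j • z j := (sum_lo_hi (pow2_pos p) (fun j => t j • z j)).symm
      _ = ∑ j, t j • z j := rfl
  have hFbarM : Fbar = Mk 0 i0 := by
    rw [hFbar, hMk]
    show _ = mk2 (lev x t 0 i0) (lev y t 0 i0)
    rw [hrow x, hrow y]
    ext i a
    fin_cases i <;>
      simp [mk2, hF, Finset.sum_apply, Matrix.sum_apply, mul_comm]
  -- final assembly
  have main := claimA p 0 (by omega) i0
  have B1 : ∑ n ∈ Finset.range (2 ^ p), H (i0.1 * 2 ^ p + n) = ∑ r : Fin (2 ^ p), ψ (LM r) := by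
    have : ∀ n ∈ Finset.range (2 ^ p), H (i0.1 * 2 ^ p + n) = H n := by
      intro n _; exact congrArg H (by show 0 * 2 ^ p + n = n; simp)
    rw [Finset.sum_congr rfl this, ← Fin.sum_univ_eq_sum_range H (2 ^ p)]
    exact Finset.sum_congr rfl fun r _ => hHval r
  calc ψ Fbar = ψ (Mk 0 i0) := by rw [hFbarM]
    _ ≤ ((2:ℝ) ^ p)⁻¹ * ∑ n ∈ Finset.range (2 ^ p), H (i0.1 * 2 ^ p + n) := main
    _ = ((2:ℝ) ^ p)⁻¹ * ∑ r : Fin (2 ^ p), ψ (LM r) := by rw [B1]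
    _ ≤ ((2:ℝ) ^ p)⁻¹ * ∑ r : Fin (2 ^ p),
          (2 ^ p * t (lo r) * ψ (F (lo r)) + 2 ^ p * t (hi r) * ψ (F (hi r))) := by
        apply mul_le_mul_of_nonneg_left (Finset.sum_le_sum fun r _ => claimB r)
        positivity
    _ = ∑ r : Fin (2 ^ p), (t (lo r) * ψ (F (lo r)) + t (hi r) * ψ (F (hi r))) := by
        rw [Finset.mul_sum]
        refine Finset.sum_congr rfl fun r _ => ?_
        have hr : ((2:ℝ) ^ p)⁻¹ * (2 ^ p * t (lo r) * ψ (F (lo r)) + 2 ^ p * t (hi r) * ψ (F (hi r)))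
            = (((2:ℝ) ^ p)⁻¹ * 2 ^ p) * (t (lo r) * ψ (F (lo r)) + t (hi r) * ψ (F (hi r))) := by
          ring
        rw [hr, inv_mul_cancel₀ h2pn, one_mul]
    _ = ∑ j : Fin (2 ^ p * 2), t j * ψ (F j) :=
        (sum_lo_hi (pow2_pos p) (fun j => t j * ψ (F j))).symm
    _ = ∑ j, t j * ψ (F j) := rfl
end
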